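/- Let F_q be a finite field with q elements of characteristic greater than 2. Suppose x, y, z, w ∈ F_q² with (x,y) ≠ (z,w) and ‖x−y‖ = ‖z−w‖ ≠ 0. If x−y ≠ z−w, then the number of ordered pairs of reflections (𝒮₁, 𝒮₂) with 𝒮₁(x) = 𝒮₂(z) and 𝒮₁(y) = 𝒮₂(w) is exactly q−1 when q ≡ 1 (mod 4) and exactly q+1 when q ≡ 3 (mod 4). If x−y = z−w and ‖x−z‖ ≠ 0, there are exactly q such pairs of reflections. If x−y = z−w and ‖x−z‖ = 0, there are no such pairs of reflections. -/

import Mathlib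

/-- The "norm" of a point of `F × F`: `‖(x₁,x₂)‖ = x₁² + x₂²`. -/
def nrm {F : Type*} [Field F] (x : F × F) : F := x.1 ^ 2 + x.2 ^ 2

/-- The linear map given by the reflection matrix `[[a,b],[b,−a]]`. -/
def refLin {F : Type*} [Field F] (a b : F) (v : F × F) : F × F :=
  (a * v.1 + b * v.2, b * v.1 - a * v.2)

/-- The reflection about `u` by the reflection matrix `[[a,b],[b,−a]]`: `v ↦ S(v−u)+u`. -/
def refAbout {F : Type*} [Field F] (a b : F) (u : F × F) : (F × F) → (F × F) :=
  fun v => refLin a b (v - u) + u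

/-- `f` is a reflection of `F²`. -/
def IsReflection {F : Type*} [Field F] (f : (F × F) → (F × F)) : Prop :=
  ∃ a b : F, a ^ 2 + b ^ 2 = 1 ∧ ∃ u : F × F, f = refAbout a b u

/-- The set of ordered pairs of reflections `(𝒮₁, 𝒮₂)` with `𝒮₁(x) = 𝒮₂(z)` and
`𝒮₁(y) = 𝒮₂(w)`. -/
def reflPairs {F : Type*} [Field F] (x y z w : F × F) :
    Set (((F × F) → (F × F)) × ((F × F) → (F × F))) :=
  {p | IsReflection p.1 ∧ IsReflection p.2 ∧ p.1 x = p.2 z ∧ p.1 y = p.2 w}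

set_option linter.unusedSectionVars false
set_option maxHeartbeats 1000000
section Infra
structure Cx (F : Type*) where
  re : F
  im : F

namespace Cx
variable {F : Type*} [Field F]

@[ext] lemma ext' {z w : Cx F} (h1 : z.re = w.re) (h2 : z.im = w.im) : z = w := by
  cases z; cases w; simp_all

instance : Add (Cx F) := ⟨fun z w => ⟨z.re + w.re, z.im + w.im⟩⟩
instance : Mul (Cx F) := ⟨fun z w => ⟨z.re * w.re - z.im * w.im, z.re * w.im + z.im * w.re⟩⟩
instance : Neg (Cx F) := ⟨fun z => ⟨-z.re, -z.im⟩⟩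
instance : Zero (Cx F) := ⟨⟨0, 0⟩⟩
instance : One (Cx F) := ⟨⟨1, 0⟩⟩

@[simp] lemma add_re (z w : Cx F) : (z + w).re = z.re + w.re := rfl
@[simp] lemma add_im (z w : Cx F) : (z + w).im = z.im + w.im := rfl
@[simp] lemma mul_re (z w : Cx F) : (z * w).re = z.re * w.re - z.im * w.im := rfl
@[simp] lemma mul_im (z w : Cx F) : (z * w).im = z.re * w.im + z.im * w.re := rfl
@[simp] lemma neg_re (z : Cx F) : (-z).re = -z.re := rfl
@[simp] lemma neg_im (z : Cx F) : (-z).im = -z.im := rfl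
@[simp] lemma zero_re : (0 : Cx F).re = 0 := rfl
@[simp] lemma zero_im : (0 : Cx F).im = 0 := rfl
@[simp] lemma one_re : (1 : Cx F).re = 1 := rfl
@[simp] lemma one_im : (1 : Cx F).im = 0 := rfl

instance : CommRing (Cx F) where
  add_assoc a b c := by ext <;> simp <;> ring
  zero_add a := by ext <;> simp
  add_zero a := by ext <;> simp
  add_comm a b := by ext <;> simp <;> ring
  mul_assoc a b c := by ext <;> simp <;> ring
  one_mul a := by ext <;> simp
  mul_one a := by ext <;> simp
  left_distrib a b c := by ext <;> simp <;> ring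
  right_distrib a b c := by ext <;> simp <;> ring
  mul_comm a b := by ext <;> simp <;> ring
  neg_add_cancel a := by ext <;> simp
  zero_mul a := by ext <;> simp
  mul_zero a := by ext <;> simp
  nsmul := nsmulRec
  zsmul := zsmulRec

@[simp] lemma sub_re (z w : Cx F) : (z - w).re = z.re - w.re := by
  change z.re + -w.re = _; ring
@[simp] lemma sub_im (z w : Cx F) : (z - w).im = z.im - w.im := by
  change z.im + -w.im = _; ring

def conj (z : Cx F) : Cx F := ⟨z.re, -z.im⟩

@[simp] lemma conj_re (z : Cx F) : (conj z).re = z.re := rfl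
@[simp] lemma conj_im (z : Cx F) : (conj z).im = -z.im := rfl
@[simp] lemma conj_add (z w : Cx F) : conj (z + w) = conj z + conj w := by ext <;> simp <;> ring
@[simp] lemma conj_mul (z w : Cx F) : conj (z * w) = conj z * conj w := by ext <;> simp <;> ring
@[simp] lemma conj_neg (z : Cx F) : conj (-z) = -conj z := by ext <;> simp
@[simp] lemma conj_sub (z w : Cx F) : conj (z - w) = conj z - conj w := by ext <;> simp <;> ring
@[simp] lemma conj_one : conj (1 : Cx F) = 1 := by ext <;> simp
@[simp] lemma conj_zero : conj (0 : Cx F) = 0 := by ext <;> simp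
@[simp] lemma conj_conj (z : Cx F) : conj (conj z) = z := by ext <;> simp

/-- scalar embedding -/
def ofF (r : F) : Cx F := ⟨r, 0⟩
@[simp] lemma ofF_re (r : F) : (ofF r).re = r := rfl
@[simp] lemma ofF_im (r : F) : (ofF r).im = 0 := rfl
@[simp] lemma conj_ofF (r : F) : conj (ofF r) = ofF r := by ext <;> simp

/-- the norm as an element of F -/
def Nf (z : Cx F) : F := z.re ^ 2 + z.im ^ 2

lemma mul_conj (z : Cx F) : z * conj z = ofF (Nf z) := by ext <;> simp [Nf] <;> ring

lemma ofF_mul_eq_zero {r : F} {z : Cx F} (hr : r ≠ 0) (h : ofF r * z = 0) : z = 0 := by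
  have h1 : r * z.re = 0 := by have := congrArg re h; simpa using this
  have h2 : r * z.im = 0 := by have := congrArg im h; simpa using this
  ext
  · exact (mul_eq_zero.mp h1).resolve_left hr
  · exact (mul_eq_zero.mp h2).resolve_left hr

end Cx

open Cx

section Main
variable {F : Type*} [Field F]

/-- embedding of `F × F` into `Cx F` -/
def ι (v : F × F) : Cx F := ⟨v.1, v.2⟩

@[simp] lemma ι_re (v : F × F) : (ι v).re = v.1 := rfl
@[simp] lemma ι_im (v : F × F) : (ι v).im = v.2 := rfl
@[simp] lemma ι_sub (v w : F × F) : ι (v - w) = ι v - ι w := by ext <;> simp [ι]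

lemma ι_inj {v w : F × F} (h : ι v = ι w) : v = w := by
  have h1 := congrArg Cx.re h; have h2 := congrArg Cx.im h
  exact Prod.ext h1 h2

lemma nrm_eq (v : F × F) : nrm v = Nf (ι v) := rfl

/-- affine map `v ↦ c * conj v + t` seen as a map on `F × F` -/
def aff (c t : Cx F) : (F × F) → (F × F) :=
  fun v => ((c * conj (ι v) + t).re, (c * conj (ι v) + t).im)

lemma aff_apply_ι (c t : Cx F) (v : F × F) : ι (aff c t v) = c * conj (ι v) + t := by
  ext <;> simp [aff]

lemma aff_param_eq {c t c' t' : Cx F} (h : aff c t = aff c' t') : c = c' ∧ t = t' := by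
  have h0 : c * conj (ι ((0:F), (0:F))) + t = c' * conj (ι ((0:F), (0:F))) + t' := by
    rw [← aff_apply_ι, ← aff_apply_ι, h]
  have h1 : c * conj (ι ((1:F), (0:F))) + t = c' * conj (ι ((1:F), (0:F))) + t' := by
    rw [← aff_apply_ι, ← aff_apply_ι, h]
  have hz : conj (ι ((0:F), (0:F))) = 0 := by ext <;> simp [ι]
  have ho : conj (ι ((1:F), (0:F))) = 1 := by ext <;> simp [ι]
  rw [hz] at h0; rw [ho] at h1
  simp only [mul_zero, zero_add, mul_one] at h0 h1
  have hc : c = c' := by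
    have := h1; rw [h0] at this; exact add_right_cancel this
  exact ⟨hc, h0⟩

lemma isReflection_iff (h2 : (2:F) ≠ 0) (f : (F × F) → (F × F)) :
    IsReflection f ↔ ∃ c t : Cx F, c * conj c = 1 ∧ c * conj t = -t ∧ f = aff c t := by
  constructor
  · rintro ⟨a, b, hab, u, rfl⟩
    refine ⟨⟨a, b⟩, ι u - ⟨a, b⟩ * conj (ι u), ?_, ?_, ?_⟩
    · ext <;> simp <;> first | ring1 | linear_combination hab
    · have hc : (⟨a, b⟩ : Cx F) * conj ⟨a, b⟩ = 1 := by
        ext <;> simp <;> first | ring1 | linear_combination hab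
      simp only [Cx.conj_sub, Cx.conj_mul, Cx.conj_conj]
      linear_combination (-(ι u)) * hc
    · funext v
      have : refAbout a b u v = aff ⟨a, b⟩ (ι u - ⟨a, b⟩ * conj (ι u)) v := by
        simp only [refAbout, refLin, aff]
        apply Prod.ext <;> simp [ι, conj] <;> ring
      exact this
  · rintro ⟨c, t, hc, ht, rfl⟩
    refine ⟨c.re, c.im, ?_, ((2:F)⁻¹ * t.re, (2:F)⁻¹ * t.im), ?_⟩
    · have := congrArg Cx.re hc; simpa [pow_two] using this
    · funext v
      have key : ι ((2:F)⁻¹ * t.re, (2:F)⁻¹ * t.im) - c * conj (ι ((2:F)⁻¹ * t.re, (2:F)⁻¹ * t.im)) = t := by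
        have hre := congrArg Cx.re ht
        have him := congrArg Cx.im ht
        simp at hre him
        ext
        · simp [ι]; field_simp; linear_combination -hre
        · simp [ι]; field_simp; linear_combination -him
      have : refAbout c.re c.im ((2:F)⁻¹ * t.re, (2:F)⁻¹ * t.im) v
          = aff c (ι ((2:F)⁻¹ * t.re, (2:F)⁻¹ * t.im) - c * conj (ι ((2:F)⁻¹ * t.re, (2:F)⁻¹ * t.im))) v := by
        simp only [refAbout, refLin, aff]
        apply Prod.ext <;> simp [ι, conj] <;> ring
      rw [key] at this
      exact this.symm

lemma mem_reflPairs_iff (h2 : (2:F) ≠ 0) (x y z w : F × F) (f₁ f₂ : (F × F) → (F × F)) :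
    (f₁, f₂) ∈ reflPairs x y z w ↔
      ∃ c₁ t₁ c₂ t₂ : Cx F,
        c₁ * conj c₁ = 1 ∧ c₂ * conj c₂ = 1 ∧ c₁ * conj t₁ = -t₁ ∧ c₂ * conj t₂ = -t₂ ∧
        f₁ = aff c₁ t₁ ∧ f₂ = aff c₂ t₂ ∧
        c₁ * conj (ι x) + t₁ = c₂ * conj (ι z) + t₂ ∧
        c₁ * conj (ι y) + t₁ = c₂ * conj (ι w) + t₂ := by
  constructor
  · rintro ⟨hr1, hr2, hxz, hyw⟩
    obtain ⟨c₁, t₁, hc1, ht1, hf1⟩ := (isReflection_iff h2 f₁).mp hr1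
    obtain ⟨c₂, t₂, hc2, ht2, hf2⟩ := (isReflection_iff h2 f₂).mp hr2
    refine ⟨c₁, t₁, c₂, t₂, hc1, hc2, ht1, ht2, hf1, hf2, ?_, ?_⟩
    · rw [← aff_apply_ι, ← aff_apply_ι, ← hf1, ← hf2]; exact congrArg ι hxz
    · rw [← aff_apply_ι, ← aff_apply_ι, ← hf1, ← hf2]; exact congrArg ι hyw
  · rintro ⟨c₁, t₁, c₂, t₂, hc1, hc2, ht1, ht2, hf1, hf2, hxz, hyw⟩
    refine ⟨(isReflection_iff h2 f₁).mpr ⟨c₁, t₁, hc1, ht1, hf1⟩,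
            (isReflection_iff h2 f₂).mpr ⟨c₂, t₂, hc2, ht2, hf2⟩, ?_, ?_⟩
    · apply ι_inj; rw [hf1, hf2, aff_apply_ι, aff_apply_ι]; exact hxz
    · apply ι_inj; rw [hf1, hf2, aff_apply_ι, aff_apply_ι]; exact hyw

end Main

section Circle
variable {F : Type*} [Field F]

lemma circ_re {c : Cx F} (hc : c * conj c = 1) : c.re ^ 2 + c.im ^ 2 = 1 := by
  have := congrArg Cx.re hc; simp at this; linear_combination this

lemma circ_of_re {c : Cx F} (hc : c.re ^ 2 + c.im ^ 2 = 1) : c * conj c = 1 := by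
  ext <;> simp <;> first | ring1 | linear_combination hc

/-- two distinct circle points are at nonzero "distance" -/
lemma circle_sep (h2F : (2:F) ≠ 0) {c c' : Cx F} (hc : c * conj c = 1)
    (hc' : c' * conj c' = 1) (h : Nf (c - c') = 0) : c = c' := by
  -- w := c * conj c'
  have hw : (c * conj c') * conj (c * conj c') = 1 := by
    simp only [Cx.conj_mul, Cx.conj_conj]
    linear_combination (conj c' * c') * hc + hc'
  have hwnorm : (c * conj c' - 1) * conj (c * conj c' - 1) = (c - c') * conj (c - c') := by
    simp only [Cx.conj_mul, Cx.conj_conj, Cx.conj_sub, Cx.conj_one]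
    linear_combination (conj c' * c' - 1) * hc
  have hNw : Nf (c * conj c' - 1) = 0 := by
    have := hwnorm
    rw [Cx.mul_conj, Cx.mul_conj, h] at this
    have := congrArg Cx.re this; simpa using this
  set w := c * conj c' with hwdef
  have h1 : w.re ^ 2 + w.im ^ 2 = 1 := circ_re hw
  have h2 : (w.re - 1) ^ 2 + w.im ^ 2 = 0 := by
    have : Nf (w - 1) = 0 := hNw
    simpa [Cx.Nf] using this
  have hre : w.re = 1 := by
    have h3 : 2 - 2 * w.re = 0 := by linear_combination h2 - h1
    have h4 : 2 * (w.re - 1) = 0 := by linear_combination -h3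
    rcases mul_eq_zero.mp h4 with h | h
    · exact absurd h h2F
    · linear_combination h
  have him : w.im = 0 := by
    have h5 := h2
    rw [hre] at h5
    have : w.im ^ 2 = 0 := by linear_combination h5
    exact pow_eq_zero_iff (by norm_num) |>.mp this
  have hw1 : c * conj c' = 1 := by
    rw [← hwdef]; ext <;> simp [hre, him]
  linear_combination c' * hw1 + (-c) * hc'

/-- a circle point annihilating an isotropic vector forces the vector to vanish -/
lemma circle_isotropic (h2F : (2:F) ≠ 0) {c s : Cx F} (hc : c * conj c = 1)
    (hline : c * conj s = -s) (hiso : Nf s = 0) : s = 0 := by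
  have hcirc : c.re ^ 2 + c.im ^ 2 = 1 := circ_re hc
  have h1 : c.re * s.re + c.im * s.im = -s.re := by
    have := congrArg Cx.re hline; simpa using this
  have h2 : -(c.re * s.im) + c.im * s.re = -s.im := by
    have := congrArg Cx.im hline; simpa using this
  have hN : s.re ^ 2 + s.im ^ 2 = 0 := hiso
  have key : s.re ^ 2 = 0 := by
    have e1 : (2:F) * (1 + c.re) * s.re ^ 2 = 0 := by
      linear_combination ((1 + c.re) * s.re - c.im * s.im) * h1 + s.im ^ 2 * hcirc
        + (1 - c.re ^ 2) * hN
    have e2 : (2:F) * (1 - c.re) * s.re ^ 2 = 0 := by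
      linear_combination (c.im * s.re + (c.re - 1) * s.im) * h2 - s.re ^ 2 * hcirc
        + (1 - c.re) ^ 2 * hN
    have h4 : (2:F) * ((2:F) * s.re ^ 2) = 0 := by linear_combination e1 + e2
    rcases mul_eq_zero.mp h4 with h | h
    · exact absurd h h2F
    rcases mul_eq_zero.mp h with h | h
    · exact absurd h h2F
    · exact h
  have hsre : s.re = 0 := pow_eq_zero_iff (by norm_num) |>.mp key
  have hsim : s.im = 0 := by
    have : s.im ^ 2 = 0 := by linear_combination hN - key
    exact pow_eq_zero_iff (by norm_num) |>.mp this
  ext <;> simp [hsre, hsim]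

end Circle

section Lines
variable {F : Type*} [Field F]

lemma line_unique (h2F : (2:F) ≠ 0) {c c' t : Cx F} (hc : c * conj c = 1)
    (hc' : c' * conj c' = 1) (hne : c ≠ c') (h : c * conj t = -t) (h' : c' * conj t = -t) :
    t = 0 := by
  have hNcc : Nf (c - c') ≠ 0 := fun hN => hne (circle_sep h2F hc hc' hN)
  have hsub : (c - c') * conj t = 0 := by linear_combination h - h'
  have h0 : ofF (Nf (c - c')) * conj t = 0 := by
    rw [← Cx.mul_conj]
    linear_combination (conj (c - c')) * hsub
  have := ofF_mul_eq_zero hNcc h0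
  have : conj (conj t) = conj 0 := congrArg conj this
  simpa using this

lemma line_prop (h2F : (2:F) ≠ 0) {c t s : Cx F} (hc : c * conj c = 1)
    (ht : c * conj t = -t) (hs : c * conj s = -s) (hsne : s ≠ 0) :
    ∃ l : F, t = ofF l * s := by
  have key : s * conj t = t * conj s := by
    linear_combination conj c * s * ht - conj c * t * hs - (s * conj t - t * conj s) * hc
  have kim := congrArg Cx.im key
  simp at kim
  have k0 : s.im * t.re - s.re * t.im = 0 := by
    have h4 : (2:F) * (s.im * t.re - s.re * t.im) = 0 := by linear_combination kim
    rcases mul_eq_zero.mp h4 with h | h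
    · exact absurd h h2F
    · exact h
  by_cases hre : s.re ≠ 0
  · refine ⟨t.re / s.re, ?_⟩
    ext <;> simp
    · field_simp
    · field_simp; linear_combination -k0
  · push_neg at hre
    have him : s.im ≠ 0 := by
      intro h; exact hsne (by ext <;> simp [hre, h])
    refine ⟨t.im / s.im, ?_⟩
    have htre : t.re = 0 := by
      have : s.im * t.re = 0 := by linear_combination k0 + t.im * hre
      exact (mul_eq_zero.mp this).resolve_left him
    ext <;> simp [hre, htre]
    field_simp

lemma line_exist {c₁ c₂ g t₁ δ' : Cx F} (h1 : c₁ * conj c₁ = 1) (h2 : c₂ * conj c₂ = 1)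
    (hδ : (1 - c₂ * conj c₁) * δ' = 1)
    (ht : t₁ * (1 - c₂ * conj c₁) = -(g + c₂ * conj g)) :
    c₁ * conj t₁ = -t₁ ∧ c₂ * conj (t₁ + g) = -(t₁ + g) := by
  set δ := 1 - c₂ * conj c₁ with hδdef
  set cδ := 1 - conj c₂ * c₁ with hcδdef
  have hδc : cδ * conj δ' = 1 := by
    have := congrArg conj hδ
    simpa [hδdef, hcδdef] using this
  have htc : conj t₁ * cδ = -(conj g + conj c₂ * g) := by
    have := congrArg conj ht
    simpa [hδdef, hcδdef] using this
  have hA : c₁ * (conj g + conj c₂ * g) * δ = -((g + c₂ * conj g) * cδ) := by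
    simp only [hδdef, hcδdef]
    linear_combination (-(c₂ * conj c₂ * g) - c₂ * conj g) * h1 + (-(c₁ * conj g) - g) * h2
  have E1 : (c₁ * conj t₁ + t₁) * (δ * cδ) = 0 := by
    linear_combination c₁ * δ * htc + cδ * ht - hA
  have goal1 : c₁ * conj t₁ = -t₁ := by
    linear_combination δ' * conj δ' * E1 - (c₁ * conj t₁ + t₁) * cδ * conj δ' * hδ
      - (c₁ * conj t₁ + t₁) * hδc
  refine ⟨goal1, ?_⟩
  have ht2 : (t₁ + g) * δ = -(c₂ * (conj g + conj c₁ * g)) := by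
    linear_combination ht
  have htc2 : conj (t₁ + g) * cδ = -(conj c₂ * (g + c₁ * conj g)) := by
    have := congrArg conj ht2
    simpa [hδdef, hcδdef] using this
  have hA2 : δ * (g + c₁ * conj g) = -(c₂ * (conj g + conj c₁ * g) * cδ) := by
    simp only [hδdef, hcδdef]
    linear_combination (-(c₂ * conj c₂ * g) - c₂ * conj g) * h1 + (-(c₁ * conj g) - g) * h2
  have E2 : (c₂ * conj (t₁ + g) + (t₁ + g)) * (δ * cδ) = 0 := by
    linear_combination c₂ * δ * htc2 + cδ * ht2 - δ * (g + c₁ * conj g) * h2 - hA2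
  linear_combination δ' * conj δ' * E2 - (c₂ * conj (t₁ + g) + (t₁ + g)) * cδ * conj δ' * hδ
    - (c₂ * conj (t₁ + g) + (t₁ + g)) * hδc

end Lines

section Cases
variable {F : Type*} [Field F]

lemma caseA (h2F : (2:F) ≠ 0) (x y z w : F × F)
    (hd : nrm (x - y) = nrm (z - w)) (h0 : nrm (x - y) ≠ 0) (hxyzw : x - y ≠ z - w) :
    ∃ Φ : Cx F → (((F × F) → (F × F)) × ((F × F) → (F × F))),
      Set.BijOn Φ {c : Cx F | c * conj c = 1} (reflPairs x y z w) := by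
  set X := ι x with hX_def
  set Y := ι y with hY_def
  set Z := ι z with hZ_def
  set W := ι w with hW_def
  set D := X - Y with hD_def
  set E := Z - W with hE_def
  set n := Nf D with hn_def
  have hn : n ≠ 0 := by
    rw [hn_def, hD_def, hX_def, hY_def, ← ι_sub, ← nrm_eq]; exact h0
  have hNE : Nf E = n := by
    rw [hn_def, hE_def, hD_def, hX_def, hY_def, hZ_def, hW_def, ← ι_sub, ← ι_sub,
      ← nrm_eq, ← nrm_eq]
    exact hd.symm
  have hDn : D * conj D * ofF n⁻¹ = 1 := by
    rw [Cx.mul_conj, ← hn_def]; ext <;> simp; field_simp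
  have hEn : E * conj E * ofF n⁻¹ = 1 := by
    rw [Cx.mul_conj, hNE]; ext <;> simp; field_simp
  have hDEne : D ≠ E := by
    intro h
    apply hxyzw
    apply ι_inj
    rw [ι_sub, ι_sub]; exact h
  set A : Cx F → Cx F := fun c => c * conj E * D * ofF n⁻¹ with hA_def
  set G : Cx F → Cx F := fun c => A c * conj X - c * conj Z with hG_def
  set Δ : Cx F → Cx F := fun c => 1 - c * conj (A c) with hΔ_def
  set P : Cx F → Cx F := fun c => conj (Δ c) * ofF (Nf (Δ c))⁻¹ with hP_def
  set T : Cx F → Cx F := fun c => -(G c + c * conj (G c)) * P c with hT_def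
  -- basic facts about the construction
  have hA1 : ∀ c : Cx F, c * conj c = 1 → A c * conj (A c) = 1 := by
    intro c hc
    simp only [hA_def, Cx.conj_mul, Cx.conj_conj, Cx.conj_ofF]
    linear_combination (D * E * conj D * conj E * (ofF n⁻¹)^2) * hc
      + (E * conj E * ofF n⁻¹) * hDn + hEn
  have hrel : ∀ c : Cx F, A c * conj D = c * conj E := by
    intro c
    simp only [hA_def]
    linear_combination (c * conj E) * hDn
  have hAne : ∀ c : Cx F, c * conj c = 1 → A c ≠ c := by
    intro c hc heq
    have h1 : c * conj D = c * conj E := by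
      have h1' := hrel c; rw [heq] at h1'; exact h1'
    have h2 : conj D = conj E := by
      linear_combination conj c * h1 + (conj E - conj D) * hc
    exact hDEne (by simpa using congrArg conj h2)
  have hΔne : ∀ c : Cx F, c * conj c = 1 → Nf (Δ c) ≠ 0 := by
    intro c hc hzero
    have hnsub : Δ c * conj (Δ c) = (A c - c) * conj (A c - c) := by
      simp only [hΔ_def, Cx.conj_sub, Cx.conj_mul, Cx.conj_conj, Cx.conj_one]
      linear_combination (conj c * c - 1) * (hA1 c hc)
    have : Nf (A c - c) = 0 := by
      have h3 := hnsub
      rw [Cx.mul_conj, Cx.mul_conj, hzero] at h3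
      have := congrArg Cx.re h3; simpa using this.symm
    exact hAne c hc (circle_sep h2F (hA1 c hc) hc this)
  have hΔP : ∀ c : Cx F, c * conj c = 1 → Δ c * P c = 1 := by
    intro c hc
    rw [hP_def]
    show Δ c * (conj (Δ c) * ofF (Nf (Δ c))⁻¹) = 1
    rw [← mul_assoc, Cx.mul_conj]
    have := hΔne c hc
    ext <;> simp
    field_simp
  have hT1 : ∀ c : Cx F, c * conj c = 1 → T c * Δ c = -(G c + c * conj (G c)) := by
    intro c hc
    rw [hT_def]
    show -(G c + c * conj (G c)) * P c * Δ c = _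
    linear_combination (-(G c + c * conj (G c))) * (hΔP c hc)
  have hlines : ∀ c : Cx F, c * conj c = 1 →
      A c * conj (T c) = -(T c) ∧ c * conj (T c + G c) = -(T c + G c) := by
    intro c hc
    exact line_exist (hA1 c hc) hc
      (show (1 - c * conj (A c)) * P c = 1 from hΔP c hc)
      (show T c * (1 - c * conj (A c)) = -(G c + c * conj (G c)) from hT1 c hc)
  refine ⟨fun c => (aff (A c) (T c), aff c (T c + G c)), ?_, ?_, ?_⟩
  · -- MapsTo
    intro c hc
    have hc' : c * conj c = 1 := hc
    show (aff (A c) (T c), aff c (T c + G c)) ∈ reflPairs x y z w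
    rw [mem_reflPairs_iff h2F]
    refine ⟨A c, T c, c, T c + G c, hA1 c hc', hc', (hlines c hc').1, (hlines c hc').2,
      rfl, rfl, ?_, ?_⟩
    · simp only [hG_def, ← hX_def, ← hZ_def]; ring
    · have hr := hrel c
      simp only [hD_def, hE_def, Cx.conj_sub] at hr
      simp only [hG_def, ← hX_def, ← hY_def, ← hZ_def, ← hW_def]
      linear_combination -hr
  · -- InjOn
    intro c hc c' hc' heq
    have h2 : aff c (T c + G c) = aff c' (T c' + G c') := congrArg Prod.snd heq
    exact (aff_param_eq h2).1
  · -- SurjOn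
    rintro ⟨f₁, f₂⟩ hmem
    rw [mem_reflPairs_iff h2F] at hmem
    obtain ⟨c₁, t₁, c₂, t₂, hc1, hc2, ht1, ht2, hf1, hf2, hxz, hyw⟩ := hmem
    have hsub : c₁ * conj D = c₂ * conj E := by
      simp only [hD_def, hE_def, Cx.conj_sub]
      linear_combination hxz - hyw
    have hc1A : c₁ = A c₂ := by
      show c₁ = c₂ * conj E * D * ofF n⁻¹
      linear_combination (D * ofF n⁻¹) * hsub - c₁ * hDn
    have ht2eq : t₂ = t₁ + G c₂ := by
      simp only [hG_def, ← hc1A, ← hX_def, ← hZ_def]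
      linear_combination -hxz
    have hTl := hlines c₂ hc2
    have hδt1 : c₁ * conj (t₁ - T c₂) = -(t₁ - T c₂) := by
      have h5 := hTl.1
      rw [← hc1A] at h5
      simp only [Cx.conj_sub]
      linear_combination ht1 - h5
    have hδt2 : c₂ * conj (t₁ - T c₂) = -(t₁ - T c₂) := by
      have h6 := hTl.2
      simp only [Cx.conj_add] at h6
      have h7 := ht2
      rw [ht2eq] at h7
      simp only [Cx.conj_add] at h7
      simp only [Cx.conj_sub]
      linear_combination h7 - h6
    have hAne2 : c₁ ≠ c₂ := by
      rw [hc1A]; exact hAne c₂ hc2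
    have hδt0 : t₁ - T c₂ = 0 := line_unique h2F hc1 hc2 hAne2 hδt1 hδt2
    have ht1T : t₁ = T c₂ := by linear_combination hδt0
    refine ⟨c₂, hc2, ?_⟩
    show (aff (A c₂) (T c₂), aff c₂ (T c₂ + G c₂)) = (f₁, f₂)
    rw [hf1, hf2, ht2eq, hc1A, ht1T]
  
lemma caseB (h2F : (2:F) ≠ 0) (x y z w : F × F)
    (h0 : nrm (x - y) ≠ 0) (hDE : x - y = z - w) (hs : nrm (x - z) ≠ 0) :
    ∃ Φ : F → (((F × F) → (F × F)) × ((F × F) → (F × F))),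
      Set.BijOn Φ (Set.univ : Set F) (reflPairs x y z w) := by
  set X := ι x with hX_def
  set Y := ι y with hY_def
  set Z := ι z with hZ_def
  set W := ι w with hW_def
  set D := X - Y with hD_def
  set S := X - Z with hS_def
  set ns := Nf S with hns_def
  have hnsne : ns ≠ 0 := by
    rw [hns_def, hS_def, hX_def, hZ_def, ← ι_sub, ← nrm_eq]; exact hs
  have hn : Nf D ≠ 0 := by
    rw [hD_def, hX_def, hY_def, ← ι_sub, ← nrm_eq]; exact h0
  have hSne : S ≠ 0 := by
    intro h; apply hnsne; rw [hns_def, h]; simp [Cx.Nf]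
  have hDEc : X - Y = Z - W := by
    rw [hX_def, hY_def, hZ_def, hW_def, ← ι_sub, ← ι_sub, hDE]
  have hSn : S * conj S * ofF ns⁻¹ = 1 := by
    rw [Cx.mul_conj, ← hns_def]; ext <;> simp; field_simp
  set C : Cx F := -(S * S) * ofF ns⁻¹ with hC_def
  have hC1 : C * conj C = 1 := by
    simp only [hC_def, Cx.conj_mul, Cx.conj_neg, Cx.conj_ofF]
    linear_combination (S * conj S * ofF ns⁻¹ + 1) * hSn
  have hCS : C * conj S = -S := by
    simp only [hC_def]
    linear_combination (-S) * hSn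
  refine ⟨fun l => (aff C (ofF l * S), aff C (ofF l * S - S)), ?_, ?_, ?_⟩
  · -- MapsTo
    intro l _
    show (aff C (ofF l * S), aff C (ofF l * S - S)) ∈ reflPairs x y z w
    rw [mem_reflPairs_iff h2F]
    refine ⟨C, ofF l * S, C, ofF l * S - S, hC1, hC1, ?_, ?_, rfl, rfl, ?_, ?_⟩
    · simp only [Cx.conj_mul, Cx.conj_ofF]
      linear_combination ofF l * hCS
    · simp only [Cx.conj_sub, Cx.conj_mul, Cx.conj_ofF]
      linear_combination (ofF l - 1) * hCS
    · have h8 := hCS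
      simp only [hS_def, Cx.conj_sub] at h8
      simp only [← hX_def, ← hZ_def, ← hS_def]
      linear_combination h8
    · have h8 := hCS
      simp only [hS_def, Cx.conj_sub] at h8
      have h9 : conj Y - conj W = conj X - conj Z := by
        have := congrArg conj hDEc
        simp only [Cx.conj_sub] at this
        linear_combination -this
      simp only [← hX_def, ← hY_def, ← hZ_def, ← hW_def, ← hS_def]
      linear_combination h8 + C * h9
  · -- InjOn
    intro l _ l' _ heq
    have h2 : aff C (ofF l * S) = aff C (ofF l' * S) := congrArg Prod.fst heq
    have h3 := (aff_param_eq h2).2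
    have h4 : ofF (l - l') * S = 0 := by
      have : ofF l - ofF l' = ofF (l - l') := by ext <;> simp
      linear_combination S * this.symm + h3
    by_contra hll
    have hll' : l - l' ≠ 0 := sub_ne_zero.mpr hll
    exact hSne (ofF_mul_eq_zero hll' h4)
  · -- SurjOn
    rintro ⟨f₁, f₂⟩ hmem
    rw [mem_reflPairs_iff h2F] at hmem
    obtain ⟨c₁, t₁, c₂, t₂, hc1, hc2, ht1, ht2, hf1, hf2, hxz, hyw⟩ := hmem
    have hsub : c₁ * conj D = c₂ * conj D := by
      have hE : conj Z - conj W = conj X - conj Y := by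
        have := congrArg conj hDEc
        simp only [Cx.conj_sub] at this
        linear_combination -this
      simp only [hD_def, Cx.conj_sub]
      linear_combination hxz - hyw + c₂ * hE
    have hc12 : c₁ = c₂ := by
      have h5 : ofF (Nf D) * (c₁ - c₂) = 0 := by
        rw [← Cx.mul_conj]
        linear_combination D * hsub
      have := ofF_mul_eq_zero hn h5
      linear_combination this
    -- t₂ - t₁ = c₂ * conj S  and it lies on the line of c₂
    have hg : t₂ - t₁ = c₂ * conj S := by
      simp only [hS_def, Cx.conj_sub]
      rw [hc12] at hxz
      linear_combination -hxz
    have hgline : c₂ * conj (t₂ - t₁) = -(t₂ - t₁) := by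
      have ht1' := ht1
      rw [hc12] at ht1'
      simp only [Cx.conj_sub]
      linear_combination ht2 - ht1'
    have hc2S : c₂ * conj S = -S := by
      have h6 : c₂ * conj (c₂ * conj S) = -(c₂ * conj S) := by
        rw [← hg]; exact hgline
      simp only [Cx.conj_mul, Cx.conj_conj] at h6
      linear_combination h6 - S * hc2
    have hc2C : c₂ = C := by
      simp only [hC_def]
      linear_combination (S * ofF ns⁻¹) * hc2S - c₂ * hSn
    obtain ⟨l, hl⟩ := line_prop h2F hc2 (hc12 ▸ ht1) hc2S hSne
    refine ⟨l, trivial, ?_⟩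
    show (aff C (ofF l * S), aff C (ofF l * S - S)) = (f₁, f₂)
    have ht2' : t₂ = ofF l * S - S := by
      linear_combination hg + hl + hc2S
    rw [hf1, hf2, hc12, hc2C, hl, ht2']
  
lemma caseC (h2F : (2:F) ≠ 0) (x y z w : F × F) (hne : (x, y) ≠ (z, w))
    (h0 : nrm (x - y) ≠ 0) (hDE : x - y = z - w) (hs : nrm (x - z) = 0) :
    reflPairs x y z w = ∅ := by
  rw [Set.eq_empty_iff_forall_notMem]
  rintro ⟨f₁, f₂⟩ hmem
  set X := ι x with hX_def
  set Y := ι y with hY_def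
  set Z := ι z with hZ_def
  set W := ι w with hW_def
  set D := X - Y with hD_def
  set S := X - Z with hS_def
  have hn : Nf D ≠ 0 := by
    rw [hD_def, hX_def, hY_def, ← ι_sub, ← nrm_eq]; exact h0
  have hNS : Nf S = 0 := by
    rw [hS_def, hX_def, hZ_def, ← ι_sub, ← nrm_eq]; exact hs
  have hDEc : X - Y = Z - W := by
    rw [hX_def, hY_def, hZ_def, hW_def, ← ι_sub, ← ι_sub, hDE]
  change reflPairs x y z w (f₁, f₂) at hmem
  have hmem2 : (f₁, f₂) ∈ reflPairs x y z w := hmem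
  rw [mem_reflPairs_iff h2F] at hmem2
  obtain ⟨c₁, t₁, c₂, t₂, hc1, hc2, ht1, ht2, hf1, hf2, hxz, hyw⟩ := hmem2
  have hsub : c₁ * conj D = c₂ * conj D := by
    have hE : conj Z - conj W = conj X - conj Y := by
      have := congrArg conj hDEc
      simp only [Cx.conj_sub] at this
      linear_combination -this
    simp only [hD_def, Cx.conj_sub]
    linear_combination hxz - hyw + c₂ * hE
  have hc12 : c₁ = c₂ := by
    have h5 : ofF (Nf D) * (c₁ - c₂) = 0 := by
      rw [← Cx.mul_conj]
      linear_combination D * hsub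
    have := ofF_mul_eq_zero hn h5
    linear_combination this
  have hg : t₂ - t₁ = c₂ * conj S := by
    simp only [hS_def, Cx.conj_sub]
    rw [hc12] at hxz
    linear_combination -hxz
  have hgline : c₂ * conj (t₂ - t₁) = -(t₂ - t₁) := by
    have ht1' := ht1
    rw [hc12] at ht1'
    simp only [Cx.conj_sub]
    linear_combination ht2 - ht1'
  have hc2S : c₂ * conj S = -S := by
    have h6 : c₂ * conj (c₂ * conj S) = -(c₂ * conj S) := by
      rw [← hg]; exact hgline
    simp only [Cx.conj_mul, Cx.conj_conj] at h6
    linear_combination h6 - S * hc2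
  have hS0 : S = 0 := circle_isotropic h2F hc2 hc2S hNS
  have hxz' : x = z := by
    have : ι x - ι z = 0 := hS0
    have h7 : ι x = ι z := by linear_combination this
    exact ι_inj h7
  have hyw' : y = w := by
    have hS0' : X - Z = 0 := hS0
    have h8 : Y = W := by linear_combination hS0' - hDEc
    exact ι_inj h8
  exact hne (by rw [hxz', hyw'])

end Cases

section Counting
variable {F : Type*} [Field F]

def cxEquiv : Cx F ≃ (F × F) where
  toFun z := (z.re, z.im)
  invFun p := ⟨p.1, p.2⟩
  left_inv z := by cases z; rfl
  right_inv p := rfl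

instance [Finite F] : Finite (Cx F) := Finite.of_equiv _ (cxEquiv (F := F)).symm

lemma circle_count [Fintype F] (h2F : (2:F) ≠ 0) :
    {c : Cx F | c * conj c = 1}.ncard + {m : F | m ^ 2 = -1}.ncard = Fintype.card F + 1 := by
  classical
  set R : Set F := {m : F | m ^ 2 = -1} with hR_def
  set T : Set F := Rᶜ with hT_def
  have hTmem : ∀ m : F, m ∈ T ↔ m ^ 2 ≠ -1 := by
    intro m; simp [hT_def, hR_def]
  have hden : ∀ m ∈ T, 1 + m ^ 2 ≠ 0 := by
    intro m hm h
    exact ((hTmem m).mp hm) (by linear_combination h)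
  set ψ : F → Cx F := fun m => ⟨(1 - m ^ 2) / (1 + m ^ 2), 2 * m / (1 + m ^ 2)⟩ with hψ_def
  have hre_ne : ∀ m ∈ T, 1 + (ψ m).re ≠ 0 := by
    intro m hm h
    have h1 := hden m hm
    have h2 : (1 - m ^ 2) / (1 + m ^ 2) = -1 := by linear_combination h
    field_simp at h2
    exact h2F (by linear_combination h2)
  have hrec : ∀ m ∈ T, (ψ m).im / (1 + (ψ m).re) = m := by
    intro m hm
    have h1 := hden m hm
    rw [div_eq_iff (hre_ne m hm)]
    show 2 * m / (1 + m ^ 2) = m * (1 + (1 - m ^ 2) / (1 + m ^ 2))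
    field_simp
    ring
  have hset : {c : Cx F | c * conj c = 1} = insert ⟨-1, 0⟩ (ψ '' T) := by
    ext c
    simp only [Set.mem_setOf_eq, Set.mem_insert_iff, Set.mem_image]
    constructor
    · intro hc
      have hcomp : c.re ^ 2 + c.im ^ 2 = 1 := circ_re hc
      by_cases hone : c = ⟨-1, 0⟩
      · exact Or.inl hone
      · right
        have hcre : 1 + c.re ≠ 0 := by
          intro h
          apply hone
          have hre : c.re = -1 := by linear_combination h
          have : c.im ^ 2 = 0 := by rw [hre] at hcomp; linear_combination hcomp
          have him : c.im = 0 := pow_eq_zero_iff (by norm_num) |>.mp this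
          ext <;> simp [hre, him]
        refine ⟨c.im / (1 + c.re), ?_, ?_⟩
        · rw [hTmem]
          intro h
          have him2 : c.im ^ 2 = -(1 + c.re) ^ 2 := by
            field_simp at h
            linear_combination h
          have h4 : (2:F) * (1 + c.re) = 0 := by linear_combination him2 - hcomp
          rcases mul_eq_zero.mp h4 with h5 | h5
          · exact h2F h5
          · exact hcre h5
        · have hsum : 1 + (c.im / (1 + c.re)) ^ 2 = 2 / (1 + c.re) := by
            field_simp
            linear_combination hcomp
          have h2cre : 2 / (1 + c.re) ≠ 0 := div_ne_zero h2F hcre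
          ext
          · show (1 - (c.im / (1 + c.re)) ^ 2) / (1 + (c.im / (1 + c.re)) ^ 2) = c.re
            rw [hsum, div_eq_iff h2cre]
            field_simp
            linear_combination -hcomp
          · show (2 * (c.im / (1 + c.re))) / (1 + (c.im / (1 + c.re)) ^ 2) = c.im
            rw [hsum, div_eq_iff h2cre]
            field_simp
    · intro hc
      rcases hc with h | ⟨m, hm, rfl⟩
      · rw [h]
        apply circ_of_re
        norm_num
      · apply circ_of_re
        have h1 := hden m hm
        show ((1 - m ^ 2) / (1 + m ^ 2)) ^ 2 + (2 * m / (1 + m ^ 2)) ^ 2 = 1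
        field_simp
        ring
  have hnotmem : (⟨-1, 0⟩ : Cx F) ∉ ψ '' T := by
    rintro ⟨m, hm, heq⟩
    have h1 := hden m hm
    have h2 : (1 - m ^ 2) / (1 + m ^ 2) = -1 := congrArg Cx.re heq
    field_simp at h2
    exact h2F (by linear_combination h2)
  have hinj : Set.InjOn ψ T := by
    intro m hm m' hm' heq
    rw [← hrec m hm, ← hrec m' hm', heq]
  rw [hset, Set.ncard_insert_of_notMem hnotmem, Set.ncard_image_of_injOn hinj]
  have hcompl : R.ncard + T.ncard = Fintype.card F := by
    rw [hT_def]
    rw [Set.ncard_add_ncard_compl]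
    exact Nat.card_eq_fintype_card
  omega

lemma roots_card_one (h2F : (2:F) ≠ 0) (h : IsSquare (-1 : F)) :
    {m : F | m ^ 2 = -1}.ncard = 2 := by
  obtain ⟨i, hi⟩ := h
  have hi0 : i ≠ 0 := by
    intro h0
    rw [h0] at hi
    exact absurd (show (1:F) = 0 by linear_combination -hi) one_ne_zero
  have hset : {m : F | m ^ 2 = -1} = {i, -i} := by
    ext m
    simp only [Set.mem_setOf_eq, Set.mem_insert_iff, Set.mem_singleton_iff]
    constructor
    · intro hm
      have : (m - i) * (m + i) = 0 := by linear_combination hm + hi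
      rcases mul_eq_zero.mp this with h5 | h5
      · left; linear_combination h5
      · right; linear_combination h5
    · rintro (rfl | rfl)
      · linear_combination -hi
      · linear_combination -hi
  rw [hset]
  apply Set.ncard_pair
  intro heq
  have : (2:F) * i = 0 := by linear_combination heq
  rcases mul_eq_zero.mp this with h5 | h5
  · exact h2F h5
  · exact hi0 h5

lemma roots_card_three (h : ¬ IsSquare (-1 : F)) :
    {m : F | m ^ 2 = -1}.ncard = 0 := by
  have : {m : F | m ^ 2 = -1} = ∅ := by
    rw [Set.eq_empty_iff_forall_notMem]
    intro m hm
    have hm' : m ^ 2 = -1 := hm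
    exact h ⟨m, by linear_combination -hm'⟩
  rw [this, Set.ncard_empty]

end Counting

end Infra

/-- Suppose `(x,y) ≠ (z,w)` and `‖x−y‖ = ‖z−w‖ ≠ 0`.  If `x−y ≠ z−w`, the number of
pairs of reflections `(𝒮₁,𝒮₂)` with `𝒮₁(x)=𝒮₂(z)`, `𝒮₁(y)=𝒮₂(w)` is `q−1` when
`q ≡ 1 (mod 4)` and `q+1` when `q ≡ 3 (mod 4)`.  If `x−y = z−w` and `‖x−z‖ ≠ 0`, there
are exactly `q` such pairs; if `x−y = z−w` and `‖x−z‖ = 0`, there are none. -/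
theorem rotations_from_reflections (F : Type) [Field F] [Fintype F]
    (hchar : 2 < ringChar F) (x y z w : F × F)
    (hne : (x, y) ≠ (z, w)) (hd : nrm (x - y) = nrm (z - w)) (h0 : nrm (x - y) ≠ 0) :
    (x - y ≠ z - w →
      (Fintype.card F % 4 = 1 → (reflPairs x y z w).ncard = Fintype.card F - 1) ∧
      (Fintype.card F % 4 = 3 → (reflPairs x y z w).ncard = Fintype.card F + 1)) ∧
    (x - y = z - w → nrm (x - z) ≠ 0 → (reflPairs x y z w).ncard = Fintype.card F) ∧
    (x - y = z - w → nrm (x - z) = 0 → (reflPairs x y z w).ncard = 0) := by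
  have h2F : (2:F) ≠ 0 := by
    intro h2
    haveI := ringChar.charP F
    have hdvd : ringChar F ∣ 2 := (CharP.cast_eq_zero_iff F (ringChar F) 2).mp (by exact_mod_cast h2)
    have := Nat.le_of_dvd (by norm_num) hdvd
    omega
  have hcard2 : 2 ≤ Fintype.card F := Fintype.one_lt_card
  refine ⟨?_, ?_, ?_⟩
  · intro hdne
    obtain ⟨Φ, hbij⟩ := caseA h2F x y z w hd h0 hdne
    have hcard : (reflPairs x y z w).ncard = {c : Cx F | c * Cx.conj c = 1}.ncard := by
      rw [← hbij.image_eq, Set.ncard_image_of_injOn hbij.injOn]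
    have hcc := circle_count (F := F) h2F
    constructor
    · intro hq1
      have hsq : IsSquare (-1:F) := (FiniteField.isSquare_neg_one_iff).mpr (by omega)
      have hr := roots_card_one h2F hsq
      rw [hcard]; omega
    · intro hq3
      have hsq : ¬ IsSquare (-1:F) := fun hs => (FiniteField.isSquare_neg_one_iff.mp hs) hq3
      have hr := roots_card_three hsq
      rw [hcard]; omega
  · intro hdeq hsne
    obtain ⟨Φ, hbij⟩ := caseB h2F x y z w h0 hdeq hsne
    rw [← hbij.image_eq, Set.ncard_image_of_injOn hbij.injOn, Set.ncard_univ,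
      Nat.card_eq_fintype_card]
  · intro hdeq hs0
    rw [caseC h2F x y z w hne h0 hdeq hs0, Set.ncard_empty]
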